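/- Let λ ∈ [0,1], n ≥ 1, E a finite index type, and p, q natural numbers. Let u, w₁, …, wₙ ∈ ℝ^E with mean w̄ = (∑ i, wᵢ)/n; let β, b₁, …, bₙ : Fin p → ℝ be monotone tuples with coordinatewise mean b̄, and δ, d₁, …, dₙ : Fin q → ℝ be monotone tuples with coordinatewise mean d̄. Write D for the squared matching distance (minimum over permutations of the total squared matching cost). Then ∑ i, [ (1−λ)‖u − wᵢ‖² + λ·(D(β, bᵢ) + D(δ, dᵢ)) ] = n(1−λ)‖u − w̄‖² + nλ·(D(β, b̄) + D(δ, d̄)) + (1−λ)∑ i, ‖wᵢ − w̄‖² + λ·∑ i, (D(b̄, bᵢ) + D(d̄, dᵢ)). In particular, minimizing the left-hand side over (u, β, δ) is equivalent to minimizing (1−λ)‖u − w̄‖² + λ·(D(β, b̄) + D(δ, d̄)). -/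

import Mathlib

/-- The squared matching distance between two tuples in `Fin m → ℝ`: the minimum over
all permutations `σ` of `Fin m` of the total squared matching cost. -/
noncomputable def matchDist (m : ℕ) (x y : Fin m → ℝ) : ℝ :=
  ⨅ σ : Equiv.Perm (Fin m), ∑ l, (x l - y (σ l)) ^ 2

lemma monovary_of_monotone {m : ℕ} {x y : Fin m → ℝ} (hx : Monotone x) (hy : Monotone y) :
    Monovary x y := fun _ _ h =>
  hx (not_lt.1 fun hji => absurd h (not_lt.2 (hy hji.le)))

lemma matchDist_eq {m : ℕ} {x y : Fin m → ℝ} (hx : Monotone x) (hy : Monotone y) :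
    matchDist m x y = ∑ l, (x l - y l) ^ 2 := by
  apply le_antisymm
  · exact ciInf_le (Finite.bddBelow_range (fun σ : Equiv.Perm (Fin m) => ∑ l, (x l - y (σ l)) ^ 2)) (1 : Equiv.Perm (Fin m))
  · apply le_ciInf
    intro σ
    have key : ∑ l, x l * y (σ l) ≤ ∑ l, x l * y l := by
      simpa [smul_eq_mul] using (monovary_of_monotone hx hy).sum_smul_comp_perm_le_sum_smul (σ := σ)
    have hyc : ∑ l, y (σ l) ^ 2 = ∑ l, y l ^ 2 := Equiv.sum_comp σ (fun l => y l ^ 2)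
    have e1 : ∑ l, (x l - y (σ l)) ^ 2
        = ∑ l, x l ^ 2 - 2 * ∑ l, x l * y (σ l) + ∑ l, y (σ l) ^ 2 := by
      rw [Finset.mul_sum, ← Finset.sum_sub_distrib, ← Finset.sum_add_distrib]
      exact Finset.sum_congr rfl fun l _ => by ring
    have e2 : ∑ l, (x l - y l) ^ 2
        = ∑ l, x l ^ 2 - 2 * ∑ l, x l * y l + ∑ l, y l ^ 2 := by
      rw [Finset.mul_sum, ← Finset.sum_sub_distrib, ← Finset.sum_add_distrib]
      exact Finset.sum_congr rfl fun l _ => by ring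
    rw [e1, e2, hyc]
    linarith

lemma sq_decomp {n : ℕ} (hn : 1 ≤ n) (a : ℝ) (c : Fin n → ℝ) :
    ∑ i, (a - c i) ^ 2 =
      (n : ℝ) * (a - (∑ i, c i) / n) ^ 2 + ∑ i, ((∑ i, c i) / n - c i) ^ 2 := by
  have hn' : (n : ℝ) ≠ 0 := Nat.cast_ne_zero.2 (by omega)
  set μ := (∑ i, c i) / (n : ℝ) with hμ
  have hm : (n : ℝ) * μ = ∑ i, c i := by rw [hμ]; field_simp
  have e : ∀ i : Fin n, (a - c i) ^ 2
      = (a - μ) ^ 2 + 2 * (a - μ) * (μ - c i) + (μ - c i) ^ 2 := fun i => by ring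
  simp_rw [e]
  rw [Finset.sum_add_distrib, Finset.sum_add_distrib, Finset.sum_const, ← Finset.mul_sum,
    Finset.sum_sub_distrib, Finset.sum_const]
  simp only [Finset.card_univ, Fintype.card_fin, nsmul_eq_mul]
  rw [← hm]
  ring

lemma enorm_sq {E : Type*} [Fintype E] (v : EuclideanSpace ℝ E) :
    ‖v‖ ^ 2 = ∑ e, v e ^ 2 := by
  rw [EuclideanSpace.norm_eq, Real.sq_sqrt (Finset.sum_nonneg fun e _ => sq_nonneg _)]
  simp [Real.norm_eq_abs, sq_abs]

lemma double_decomp {n : ℕ} (hn : 1 ≤ n) {ι : Type*} [Fintype ι] (x : ι → ℝ)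
    (c : Fin n → ι → ℝ) :
    ∑ i, ∑ l, (x l - c i l) ^ 2 =
      (n : ℝ) * ∑ l, (x l - (∑ i, c i l) / n) ^ 2 +
        ∑ i, ∑ l, ((∑ j, c j l) / n - c i l) ^ 2 := by
  calc ∑ i, ∑ l, (x l - c i l) ^ 2 = ∑ l, ∑ i, (x l - c i l) ^ 2 := Finset.sum_comm
    _ = ∑ l, ((n : ℝ) * (x l - (∑ i, c i l) / n) ^ 2 + ∑ i, ((∑ j, c j l) / n - c i l) ^ 2) :=
        Finset.sum_congr rfl fun l _ => sq_decomp hn (x l) (fun i => c i l)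
    _ = _ := by
        rw [Finset.sum_add_distrib, Finset.mul_sum]
        congr 1
        exact Finset.sum_comm

/-- Topological interpolation (the paper's Lemma 2): the within-cluster sum of network
dissimilarities `(1-λ)‖u - wᵢ‖² + λ(D(β,bᵢ) + D(δ,dᵢ))` equals `n` times the dissimilarity
to the pair (sample mean network, topological centroid) plus a constant independent of the
candidate representative `(u, β, δ)`. -/
theorem topological_interpolation (lam : ℝ) (hlam : lam ∈ Set.Icc (0 : ℝ) 1)
    (n : ℕ) (hn : 1 ≤ n) (E : Type*) [Fintype E] (p q : ℕ)
    (u : EuclideanSpace ℝ E) (w : Fin n → EuclideanSpace ℝ E)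
    (β : Fin p → ℝ) (b : Fin n → Fin p → ℝ)
    (δ : Fin q → ℝ) (d : Fin n → Fin q → ℝ)
    (hβ : Monotone β) (hb : ∀ i, Monotone (b i))
    (hδ : Monotone δ) (hd : ∀ i, Monotone (d i)) :
    ∑ i, ((1 - lam) * ‖u - w i‖ ^ 2 +
        lam * (matchDist p β (b i) + matchDist q δ (d i))) =
      (n : ℝ) * (1 - lam) * ‖u - (n : ℝ)⁻¹ • ∑ i, w i‖ ^ 2 +
        (n : ℝ) * lam * (matchDist p β (fun l => (∑ i, b i l) / (n : ℝ)) +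
          matchDist q δ (fun l => (∑ i, d i l) / (n : ℝ))) +
        (1 - lam) * ∑ i, ‖w i - (n : ℝ)⁻¹ • ∑ j, w j‖ ^ 2 +
        lam * ∑ i, (matchDist p (fun l => (∑ j, b j l) / (n : ℝ)) (b i) +
          matchDist q (fun l => (∑ j, d j l) / (n : ℝ)) (d i)) := by
  have hninv : (0 : ℝ) ≤ (n : ℝ)⁻¹ := by positivity
  have hmb : Monotone (fun l => (∑ i, b i l) / (n : ℝ)) := by
    intro l l' h
    simp only [div_eq_mul_inv]
    exact mul_le_mul_of_nonneg_right (Finset.sum_le_sum fun i _ => hb i h) hninv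
  have hmd : Monotone (fun l => (∑ i, d i l) / (n : ℝ)) := by
    intro l l' h
    simp only [div_eq_mul_inv]
    exact mul_le_mul_of_nonneg_right (Finset.sum_le_sum fun i _ => hd i h) hninv
  -- rewrite all matchDists
  simp only [matchDist_eq hβ (hb _), matchDist_eq hδ (hd _), matchDist_eq hβ hmb,
    matchDist_eq hδ hmd, matchDist_eq hmb (hb _), matchDist_eq hmd (hd _), enorm_sq]
  have hsum_apply : ∀ e : E, (∑ i, w i) e = ∑ i, w i e := fun e => by
    simp
  simp only [PiLp.sub_apply, PiLp.smul_apply, smul_eq_mul, hsum_apply]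
  have hA := double_decomp hn (fun e => u e) (fun i e => w i e)
  have hB := double_decomp hn β b
  have hC := double_decomp hn δ d
  have hμ : ∀ e : E, (n : ℝ)⁻¹ * ∑ i, w i e = (∑ i, w i e) / (n : ℝ) := fun e => by
    rw [div_eq_mul_inv, mul_comm]
  simp only [hμ]
  have hsq : ∀ (a c : ℝ), (a - c) ^ 2 = (c - a) ^ 2 := fun a c => by ring
  have hR : ∀ i, ∑ e, (w i e - (∑ j, w j e) / (n : ℝ)) ^ 2
      = ∑ e, ((∑ j, w j e) / (n : ℝ) - w i e) ^ 2 := fun i =>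
    Finset.sum_congr rfl fun e _ => hsq _ _
  simp only [hR]
  simp only [Finset.sum_add_distrib, mul_add, ← Finset.mul_sum]
  linear_combination (1 - lam) * hA + lam * hB + lam * hC
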